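/- Let G be a finite connected simple graph on n vertices and ω0 an acyclic orientation of G. For a vertex v, let d(v) be the number of edges of a longest directed path starting at v in ω0. Then v is a sink of ω_s for some s ≤ d(v); in particular, every vertex of G becomes a sink within the first n − 1 edge-reversal steps. (Every edge-reversal computation is starvation-free, and the worst-case wait a process must undergo is O(n).) -/

import Mathlib

variable {V : Type*}

/-- `o` is an orientation of the simple graph `G`: it assigns a direction to each
edge of `G` (for adjacent `u, v`, exactly one of `o u v`, `o v u` holds) and relates
no other pairs. -/
def IsOrientation (G : SimpleGraph V) (o : V → V → Prop) : Prop :=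
  ∀ u v, (o u v → G.Adj u v) ∧ (G.Adj u v → (o u v ↔ ¬ o v u))

/-- A sink of an orientation: a vertex with no outgoing edge (every incident edge is
directed toward it). -/
def IsSink (o : V → V → Prop) (v : V) : Prop := ∀ u, ¬ o v u

/-- A directed graph (or orientation) is acyclic when it has no directed cycle. -/
def DirAcyclic (o : V → V → Prop) : Prop := ∀ v, ¬ Relation.TransGen o v v

/-- The synchronous edge-reversal step: every edge incident to a sink is reversed
(every sink becomes a source); all other edges keep their direction. -/
def revStep (o : V → V → Prop) : V → V → Prop :=
  fun u v => (o u v ∧ ¬ IsSink o v) ∨ (o v u ∧ IsSink o u)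

/-- The sequence of orientations produced by synchronous edge reversal:
`orientSeq ω0 s` is the result of `s` edge-reversal steps applied to `ω0`. -/
def orientSeq (ω0 : V → V → Prop) (s : ℕ) : V → V → Prop := revStep^[s] ω0

lemma walk_transGen (ω : V → V → Prop) (f : ℕ → V) (k : ℕ)
    (h : ∀ i < k, ω (f i) (f (i + 1))) :
    ∀ j ≤ k, ∀ i < j, Relation.TransGen ω (f i) (f j) := by
  intro j
  induction j with
  | zero => omega
  | succ j ih =>
    intro hj i hi
    rcases Nat.lt_or_ge i j with h' | h'
    · exact (ih (by omega) i h').tail (h j (by omega))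
    · have : i = j := by omega
      subst this
      exact Relation.TransGen.single (h i (by omega))

lemma key_lemma (ω : V → V → Prop) (v : V) (D : ℕ)
    (h : ∀ (f : ℕ → V) (k : ℕ), f 0 = v → (∀ i < k, ω (f i) (f (i + 1))) → k ≤ D) :
    ∃ s ≤ D, IsSink (orientSeq ω s) v := by
  induction D generalizing ω v with
  | zero =>
    refine ⟨0, le_refl 0, ?_⟩
    intro u hu
    have := h (fun i => if i = 0 then v else u) 1 (by simp) ?_
    · omega
    · intro i hi
      interval_cases i
      simpa [orientSeq] using hu
  | succ D ih =>
    by_cases hs : IsSink ω v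
    · exact ⟨0, by omega, hs⟩
    · have hstep : ∀ (f : ℕ → V) (k : ℕ), f 0 = v →
          (∀ i < k, revStep ω (f i) (f (i + 1))) → k ≤ D := by
        intro f k hf0 hwalk
        have hold : ∀ i, i < k → ω (f i) (f (i + 1)) ∧ ¬ IsSink ω (f (i + 1)) := by
          intro i
          induction i with
          | zero =>
            intro hi
            rcases hwalk 0 hi with ⟨h1, h2⟩ | ⟨h1, h2⟩
            · exact ⟨h1, h2⟩
            · exact absurd (hf0 ▸ h2) hs
          | succ i ihh =>
            intro hi
            have hprev := ihh (by omega)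
            rcases hwalk (i + 1) hi with ⟨h1, h2⟩ | ⟨h1, h2⟩
            · exact ⟨h1, h2⟩
            · exact absurd h2 hprev.2
        rcases Nat.eq_zero_or_pos k with rfl | hk
        · omega
        · have hk' : k - 1 < k := by omega
          have hlast := (hold (k - 1) hk').2
          have hk1 : k - 1 + 1 = k := by omega
          rw [hk1] at hlast
          simp only [IsSink, not_forall, not_not] at hlast
          obtain ⟨y, hy⟩ := hlast
          have := h (fun i => if i ≤ k then f i else y) (k + 1) (by simp [hf0]) ?_
          · omega
          · intro i hi
            by_cases hik : i + 1 ≤ k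
            · simp only [show i ≤ k by omega, hik, if_true]
              exact (hold i (by omega)).1
            · have : i = k := by omega
              subst this
              simp only [le_refl, if_true, show ¬ (i + 1 ≤ i) by omega, if_false]
              exact hy
      obtain ⟨s, hsD, hsink⟩ := ih (revStep ω) v hstep
      refine ⟨s + 1, by omega, ?_⟩
      have heq : orientSeq ω (s + 1) = orientSeq (revStep ω) s := by
        simp [orientSeq, Function.iterate_succ_apply]
      rw [heq]
      exact hsink

/-- Every edge-reversal computation is starvation-free, with worst-case wait `O(n)`:
if `d` is the number of edges of a longest directed path starting at `v` in the
acyclic orientation `ω0` of the finite connected simple graph `G` on `n` vertices,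
then `v` is a sink of `ω_s` for some `s ≤ d`; in particular every vertex becomes a
sink within the first `n - 1` edge-reversal steps. -/
theorem edge_reversal_starvation_free [Fintype V]
    (G : SimpleGraph V) (hG : G.Connected)
    (ω0 : V → V → Prop) (hor : IsOrientation G ω0) (hacy : DirAcyclic ω0)
    (v : V) (d : ℕ)
    (hbound : ∀ (f : ℕ → V) (k : ℕ), f 0 = v →
      (∀ i < k, ω0 (f i) (f (i + 1))) → k ≤ d)
    (hattained : ∃ f : ℕ → V, f 0 = v ∧ ∀ i < d, ω0 (f i) (f (i + 1))) :
    (∃ s ≤ d, IsSink (orientSeq ω0 s) v) ∧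
      ∀ u : V, ∃ s ≤ Fintype.card V - 1, IsSink (orientSeq ω0 s) u := by
  constructor
  · exact key_lemma ω0 v d hbound
  · intro u
    apply key_lemma
    intro f k hf0 hwalk
    by_contra hcon
    push_neg at hcon
    have hcard : Fintype.card V < k + 1 := by
      have : 1 ≤ Fintype.card V := Fintype.card_pos_iff.mpr ⟨u⟩
      omega
    obtain ⟨a, b, hab, heq⟩ :=
      Fintype.exists_ne_map_eq_of_card_lt (fun i : Fin (k + 1) => f i) (by simpa using hcard)
    rcases Ne.lt_or_gt hab with h' | h'
    · have := walk_transGen ω0 f k hwalk b (by omega) a h'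
      rw [heq] at this
      exact hacy _ this
    · have := walk_transGen ω0 f k hwalk a (by omega) b h'
      rw [← heq] at this
      exact hacy _ this
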